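/- Let f = ∑_{i=1}^n f_i where each f_i : ℝ^d → ℝ is convex and differentiable with L_max-Lipschitz gradient. Suppose w_* is a minimizer of f satisfying the interpolation property: ∇f_i(w_*) = 0 for every i ∈ {1,…,n}. Then for every w ∈ ℝ^d, every index i, and every step size 0 ≤ η ≤ 1/L_max, the stochastic gradient step satisfies ‖w − η∇f_i(w) − w_*‖ ≤ ‖w − w_*‖; that is, each stochastic gradient descent step with a sufficiently small step size deterministically moves the iterate no farther from the minimizer. -/

import Mathlib

open InnerProductSpace Set intervalIntegral

variable {E : Type*} [NormedAddCommGroup E] [InnerProductSpace ℝ E] [CompleteSpace E]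

local notation "⟪" x ", " y "⟫" => @inner ℝ _ _ x y

lemma line_hasDerivAt' {f : E → ℝ} {g : E → E}
    (hdiff : ∀ x, HasGradientAt f (g x) x) (x u : E) (t : ℝ) :
    HasDerivAt (fun s : ℝ => f (x + s • u)) ⟪g (x + t • u), u⟫ t := by
  have h1 : HasDerivAt (fun s : ℝ => x + s • u) u t := by
    simpa using ((hasDerivAt_id t).smul_const u).const_add x
  have h2 := (hdiff (x + t • u)).hasFDerivAt.comp_hasDerivAt t h1
  have h3 : HasDerivAt (fun s : ℝ => f (x + s • u)) ⟪g (x + t • u), u⟫ t := by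
    simp only [toDual_apply_apply] at h2
    exact h2
  exact h3

lemma convex_grad_lower' {f : E → ℝ} {g : E → E}
    (hconv : ConvexOn ℝ Set.univ f) (hdiff : ∀ x, HasGradientAt f (g x) x) (x y : E) :
    f x + ⟪g x, y - x⟫ ≤ f y := by
  set φ : ℝ → ℝ := fun s => f (x + s • (y - x)) with hφ
  have hconvφ : ConvexOn ℝ Set.univ φ := by
    have := hconv.comp_affineMap (AffineMap.lineMap x y : ℝ →ᵃ[ℝ] E)
    simp only [Set.preimage_univ] at this
    have heq : φ = f ∘ AffineMap.lineMap x y := by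
      ext s
      simp [φ, AffineMap.lineMap_apply, add_comm]
    rw [heq]; exact this
  have hder : HasDerivAt φ ⟪g x, y - x⟫ 0 := by
    simpa using line_hasDerivAt' hdiff x (y - x) 0
  have h := hconvφ.le_slope_of_hasDerivAt (mem_univ (0:ℝ)) (mem_univ (1:ℝ)) one_pos hder
  rw [slope_def_field] at h
  have hφ0 : φ 0 = f x := by simp [φ]
  have hφ1 : φ 1 = f y := by simp [φ]
  rw [hφ0, hφ1] at h
  linarith [h]

lemma descent' {f : E → ℝ} {g : E → E} {L : ℝ} (hL : 0 ≤ L)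
    (hdiff : ∀ x, HasGradientAt f (g x) x)
    (hlip : ∀ u v : E, ‖g u - g v‖ ≤ L * ‖u - v‖) (x y : E) :
    f y ≤ f x + ⟪g x, y - x⟫ + L / 2 * ‖y - x‖ ^ 2 := by
  set u := y - x with hu
  set ψ : ℝ → ℝ := fun t => ⟪g (x + t • u), u⟫ with hψ
  have hgcont : Continuous g := by
    rcases eq_or_lt_of_le hL with h0 | h0
    · have : ∀ v : E, g v = g 0 := by
        intro v
        have := hlip v 0
        rw [← h0, zero_mul] at this
        have : ‖g v - g 0‖ = 0 := le_antisymm this (norm_nonneg _)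
        rwa [norm_eq_zero, sub_eq_zero] at this
      rw [show g = fun _ => g 0 from funext this]; exact continuous_const
    · exact (LipschitzWith.of_dist_le_mul (K := ⟨L, hL⟩)
        (fun a b => by rw [dist_eq_norm, dist_eq_norm]; exact hlip a b)).continuous
  have hψcont : Continuous ψ := by
    apply Continuous.inner
    · exact hgcont.comp (by continuity)
    · exact continuous_const
  have hFTC : ∫ t in (0:ℝ)..1, ψ t = f (x + (1:ℝ) • u) - f (x + (0:ℝ) • u) := by
    exact intervalIntegral.integral_eq_sub_of_hasDerivAt (f := fun s : ℝ => f (x + s • u))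
      (fun t _ => line_hasDerivAt' hdiff x u t) (hψcont.intervalIntegrable 0 1)
  have hbound : ∀ t ∈ Set.Icc (0:ℝ) 1, ψ t ≤ ψ 0 + L * t * ‖u‖ ^ 2 := by
    intro t ht
    have h1 : ψ t - ψ 0 = ⟪g (x + t • u) - g (x + (0:ℝ) • u), u⟫ := by
      rw [inner_sub_left]
    have h2 : ⟪g (x + t • u) - g (x + (0:ℝ) • u), u⟫ ≤
        ‖g (x + t • u) - g (x + (0:ℝ) • u)‖ * ‖u‖ := real_inner_le_norm _ _
    have h3 : ‖g (x + t • u) - g (x + (0:ℝ) • u)‖ ≤ L * (t * ‖u‖) := by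
      have := hlip (x + t • u) (x + (0:ℝ) • u)
      simpa [norm_smul, abs_of_nonneg ht.1] using this
    have h4 : ‖g (x + t • u) - g (x + (0:ℝ) • u)‖ * ‖u‖ ≤ L * (t * ‖u‖) * ‖u‖ :=
      mul_le_mul_of_nonneg_right h3 (norm_nonneg _)
    nlinarith [norm_nonneg u]
  have hmono : ∫ t in (0:ℝ)..1, ψ t ≤ ∫ t in (0:ℝ)..1, (ψ 0 + L * t * ‖u‖ ^ 2) := by
    apply intervalIntegral.integral_mono_on (by norm_num)
      (hψcont.intervalIntegrable 0 1)
      ((by continuity : Continuous fun t : ℝ => ψ 0 + L * t * ‖u‖ ^ 2).intervalIntegrable 0 1)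
    intro t ht
    exact hbound t ht
  have hval : ∫ t in (0:ℝ)..1, (ψ 0 + L * t * ‖u‖ ^ 2) = ψ 0 + L / 2 * ‖u‖ ^ 2 := by
    have : ∀ t : ℝ, ψ 0 + L * t * ‖u‖ ^ 2 = ψ 0 + (L * ‖u‖ ^ 2) * t := by intro t; ring
    simp_rw [this]
    rw [intervalIntegral.integral_add (intervalIntegrable_const)
      ((intervalIntegral.intervalIntegrable_id).const_mul _),
      intervalIntegral.integral_const_mul, integral_id]
    simp
    ring
  have hψ0 : ψ 0 = ⟪g x, y - x⟫ := by simp [ψ, hu]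
  have hx0 : x + (0:ℝ) • u = x := by simp
  have hx1 : x + (1:ℝ) • u = y := by simp [u]
  rw [hx0, hx1] at hFTC
  rw [hval, hψ0] at hmono
  rw [hFTC] at hmono
  linarith

/-- Under interpolation, a stochastic gradient step with step size at most
1/L_max is deterministically nonexpansive with respect to the minimizer. -/
theorem sgd_step_nonexpansive_interpolation {d n : ℕ}
    (fi : Fin n → EuclideanSpace ℝ (Fin d) → ℝ)
    (fi' : Fin n → EuclideanSpace ℝ (Fin d) → EuclideanSpace ℝ (Fin d))
    (Lmax : ℝ) (hLmax : 0 < Lmax)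
    (hdiff : ∀ (i : Fin n) (x : EuclideanSpace ℝ (Fin d)), HasGradientAt (fi i) (fi' i x) x)
    (hconv : ∀ i, ConvexOn ℝ Set.univ (fi i))
    (hlip : ∀ (i : Fin n) (u v : EuclideanSpace ℝ (Fin d)),
      ‖fi' i u - fi' i v‖ ≤ Lmax * ‖u - v‖)
    (wstar : EuclideanSpace ℝ (Fin d))
    (hmin : ∀ x, (∑ i, fi i wstar) ≤ ∑ i, fi i x)
    (hinterp : ∀ i, fi' i wstar = 0) :
    ∀ (w : EuclideanSpace ℝ (Fin d)) (i : Fin n) (η : ℝ),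
      0 ≤ η → η ≤ 1 / Lmax →
      ‖w - η • fi' i w - wstar‖ ≤ ‖w - wstar‖ := by
  intro w i η hη hη2
  set g := fi' i w with hg
  -- wstar minimizes fi i
  have hminI : ∀ z, fi i wstar ≤ fi i z := by
    intro z
    have := convex_grad_lower' (hconv i) (hdiff i) wstar z
    simpa [hinterp i] using this
  -- cocoercivity at the minimizer
  have hkey : 1 / (2 * Lmax) * ‖g‖ ^ 2 ≤ ⟪g, w - wstar⟫_ℝ := by
    set y := w - (1 / Lmax) • g with hy
    have hdesc := descent' hLmax.le (hdiff i) (hlip i) w y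
    have hyw : y - w = -((1 / Lmax) • g) := by simp [hy]
    have hinner : ⟪g, y - w⟫_ℝ = -(1 / Lmax * ‖g‖ ^ 2) := by
      rw [hyw, inner_neg_right, real_inner_smul_right, real_inner_self_eq_norm_sq]
    have hnorm : ‖y - w‖ ^ 2 = (1 / Lmax) ^ 2 * ‖g‖ ^ 2 := by
      rw [hyw, norm_neg, norm_smul]
      rw [Real.norm_eq_abs, abs_of_nonneg (by positivity : (0:ℝ) ≤ 1 / Lmax)]
      ring
    rw [hinner, hnorm] at hdesc
    have hlow := convex_grad_lower' (hconv i) (hdiff i) w wstar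
    have hmy := hminI y
    have hinner2 : ⟪g, wstar - w⟫_ℝ = -⟪g, w - wstar⟫_ℝ := by
      rw [← inner_neg_right]; congr 1; abel
    rw [hinner2] at hlow
    have hL2 : Lmax / 2 * ((1 / Lmax) ^ 2 * ‖g‖ ^ 2) = 1 / (2 * Lmax) * ‖g‖ ^ 2 := by
      field_simp
    rw [hL2] at hdesc
    have h1L : (1:ℝ) / Lmax * ‖g‖ ^ 2 - 1 / (2 * Lmax) * ‖g‖ ^ 2
        = 1 / (2 * Lmax) * ‖g‖ ^ 2 := by field_simp; ring
    linarith
  -- expand the square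
  have hexp : ‖w - η • g - wstar‖ ^ 2 =
      ‖w - wstar‖ ^ 2 - 2 * (η * ⟪g, w - wstar⟫_ℝ) + η ^ 2 * ‖g‖ ^ 2 := by
    have : w - η • g - wstar = (w - wstar) - η • g := by abel
    rw [this, norm_sub_sq_real, real_inner_smul_right, norm_smul, Real.norm_eq_abs]
    rw [real_inner_comm]
    rcases abs_nonneg η with _
    rw [abs_of_nonneg hη]
    ring
  have hsq : ‖w - η • g - wstar‖ ^ 2 ≤ ‖w - wstar‖ ^ 2 := by
    have h1 : η ^ 2 * ‖g‖ ^ 2 ≤ η * (1 / Lmax) * ‖g‖ ^ 2 := by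
      have : η ^ 2 ≤ η * (1 / Lmax) := by nlinarith
      nlinarith [sq_nonneg ‖g‖]
    have h2 : η * (1 / (2 * Lmax) * ‖g‖ ^ 2) ≤ η * ⟪g, w - wstar⟫_ℝ :=
      mul_le_mul_of_nonneg_left hkey hη
    have h3 : η * (1 / Lmax) * ‖g‖ ^ 2 = 2 * (η * (1 / (2 * Lmax) * ‖g‖ ^ 2)) := by
      field_simp
    rw [hexp]
    linarith
  nlinarith [norm_nonneg (w - η • g - wstar), norm_nonneg (w - wstar)]
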